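/- Let 2 ≤ t ≤ n, n = (t+1)p + d with 0 ≤ d ≤ t, and i ≤ j < n. If β_{i,j}(R/I_t(C_n)) ≠ 0, then j − i ≤ (t−1)p. -/

import Mathlib

open Finset

def SC.facesC (Δ : Set (Finset ℕ)) (c : ℤ) : Type :=
  {F : Finset ℕ // F ∈ Δ ∧ (F.card : ℤ) = c}

open Classical in
noncomputable def SC.bdry (K : Type) [Field K] (Δ : Set (Finset ℕ)) (a b : ℤ) :
    (SC.facesC Δ a →₀ K) →ₗ[K] (SC.facesC Δ b →₀ K) :=
  Finsupp.lsum K fun F => LinearMap.toSpanSingleton K _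
    (∑ x ∈ F.1, if h : F.1.erase x ∈ Δ ∧ (((F.1.erase x).card : ℤ) = b)
      then ((-1 : K) ^ (F.1.filter (fun y => y < x)).card) •
        Finsupp.single (⟨F.1.erase x, h⟩ : SC.facesC Δ b) (1 : K)
      else 0)

noncomputable def SC.hdim (K : Type) [Field K] (Δ : Set (Finset ℕ)) (i : ℤ) : ℕ :=
  Module.finrank K (LinearMap.ker (SC.bdry K Δ (i + 1) i)) -
    Module.finrank K (LinearMap.range (SC.bdry K Δ (i + 2) (i + 1)))

def SC.gen (S : Set (Finset ℕ)) : Set (Finset ℕ) := {F | ∃ A ∈ S, F ⊆ A}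

/-- The facet `F_a = {x_a, …, x_{a+t-1}}` (indices mod `n`, vertices `0, …, n-1`). -/
def cycForm (n t a : ℕ) : Finset ℕ := (Finset.range t).image (fun k => (a + k) % n)

/-- The facets of the path complex `Δ_t(C_n)` of the cycle. -/
def cycFacets (n t : ℕ) : Finset (Finset ℕ) := (Finset.range n).image (cycForm n t)

/-- The Stanley–Reisner complex on vertex set `{0,…,n-1}` of the squarefree monomial ideal
whose minimal generators have supports `Gens`. -/
def SRcomplex (n : ℕ) (Gens : Finset (Finset ℕ)) : Set (Finset ℕ) :=
  {F | F ⊆ Finset.range n ∧ ¬ ∃ G ∈ Gens, G ⊆ F}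

open Classical in
/-- The graded Betti number `β_{i,j}(R/I)` of the squarefree monomial ideal
`I ⊆ K[x_0,…,x_{n-1}]` with generator supports `Gens`, characterized by
Hochster's formula: `β_{i,j}(R/I) = Σ_{W, |W| = j} dim_K H̃_{j-i-1}((Δ_I)|_W; K)`. -/
noncomputable def betti (K : Type) [Field K] (n : ℕ) (Gens : Finset (Finset ℕ)) (i j : ℕ) : ℕ :=
  ∑ W ∈ (Finset.range n).powersetCard j,
    SC.hdim K {F | F ∈ SRcomplex n Gens ∧ F ⊆ W} ((j : ℤ) - i - 1)

/-- Betti numbers of `R/I_t(C_n)`. -/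
noncomputable def bettiCycle (K : Type) [Field K] (n t i j : ℕ) : ℕ :=
  betti K n (cycFacets n t) i j

/-- The facets of a run of length `s` (for path length `t`) starting at vertex `a`:
`F_i = {a+i, …, a+i+t-1}` for `0 ≤ i < s`. -/
def runFacets (t a s : ℕ) : Set (Finset ℕ) := {F | ∃ i < s, F = Finset.Ico (a + i) (a + i + t)}

/-- Facets of a disjoint union of runs of lengths `L`, laid out left to right starting
at vertex `a`, with a gap between consecutive runs. -/
def runsFacets (t : ℕ) : ℕ → List ℕ → Set (Finset ℕ)
  | _, [] => ∅
  | a, s :: L => runFacets t a s ∪ runsFacets t (a + s + t) L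

/-- Vertex set of the above disjoint union of runs (a run of length `s` has `s+t-1` vertices). -/
def runsVerts (t : ℕ) : ℕ → List ℕ → Finset ℕ
  | _, [] => ∅
  | a, s :: L => Finset.Ico a (a + s + t - 1) ∪ runsVerts t (a + s + t) L

/-- `E(s_1,…,s_r)`: the complex generated by the complements, within the total vertex set,
of the facets of a disjoint union of runs of lengths `s_1, …, s_r`. -/
def EC (t : ℕ) (L : List ℕ) : Set (Finset ℕ) :=
  SC.gen {G | ∃ F ∈ runsFacets t 0 L, G = runsVerts t 0 L \ F}


namespace SCPf

variable {K : Type} [Field K] {Δ : Set (Finset ℕ)}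

/-- downward closed -/
def DC (Δ : Set (Finset ℕ)) : Prop := ∀ F ∈ Δ, ∀ G, G ⊆ F → G ∈ Δ

open Classical in
/-- `term Δ b G c`: the single `c • G` if `G` is a face of cardinality `b`, else 0. -/
noncomputable def term (Δ : Set (Finset ℕ)) (b : ℤ) (G : Finset ℕ) (c : K) :
    SC.facesC Δ b →₀ K :=
  if h : G ∈ Δ ∧ ((G.card : ℤ) = b) then Finsupp.single ⟨G, h⟩ c else 0

lemma term_eq_single (h1 : G ∈ Δ) (h2 : (G.card : ℤ) = b) (c : K) :
    term Δ b G c = Finsupp.single (⟨G, h1, h2⟩ : SC.facesC Δ b) c := by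
  rw [term, dif_pos ⟨h1, h2⟩]; rfl

lemma term_eq_zero (h : ¬ (G ∈ Δ ∧ ((G.card : ℤ) = b))) (c : K) :
    term Δ b G c = 0 := by rw [term, dif_neg h]

lemma term_zero (Δ : Set (Finset ℕ)) (b : ℤ) (G : Finset ℕ) :
    term Δ b G (0 : K) = 0 := by
  unfold term; split
  · exact Finsupp.single_zero _
  · rfl

lemma term_add (Δ : Set (Finset ℕ)) (b : ℤ) (G : Finset ℕ) (c d : K) :
    term Δ b G c + term Δ b G d = term Δ b G (c + d) := by
  unfold term; split
  · exact (Finsupp.single_add _ _ _).symm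
  · simp

/-- the sign of `x` in `F` -/
def sgn (K : Type) [Field K] (F : Finset ℕ) (x : ℕ) : K :=
  (-1 : K) ^ (F.filter (fun y => y < x)).card

lemma bdry_single (a b : ℤ) (F : SC.facesC Δ a) :
    SC.bdry K Δ a b (Finsupp.single F 1) =
      ∑ x ∈ F.1, term Δ b (F.1.erase x) (sgn K F.1 x) := by
  classical
  rw [SC.bdry, Finsupp.lsum_single, LinearMap.toSpanSingleton_apply, one_smul]
  refine Finset.sum_congr rfl fun x hx => ?_
  unfold term sgn
  split
  · rename_i h
    exact (dif_pos h).trans (Finsupp.smul_single_one _ _)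
  · rename_i h
    exact dif_neg h

lemma bdry_single' {a b : ℤ} {G : Finset ℕ} (h1 : G ∈ Δ) (h2 : (G.card : ℤ) = a) :
    SC.bdry K Δ a b (Finsupp.single (⟨G, h1, h2⟩ : SC.facesC Δ a) 1) =
      ∑ x ∈ G, term Δ b (G.erase x) (sgn K G x) :=
  bdry_single a b ⟨G, h1, h2⟩

lemma linmap_term {M : Type} [AddCommGroup M] [Module K M]
    (f : (SC.facesC Δ b →₀ K) →ₗ[K] M) (G : Finset ℕ) (c : K)
    (h1 : G ∈ Δ) (h2 : (G.card : ℤ) = b) :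
    f (term Δ b G c) = c • f (Finsupp.single ⟨G, h1, h2⟩ 1) := by
  rw [term_eq_single h1 h2]
  have : (Finsupp.single (⟨G, h1, h2⟩ : SC.facesC Δ b) c) =
      c • Finsupp.single (⟨G, h1, h2⟩ : SC.facesC Δ b) 1 := by
    rw [Finsupp.smul_single, smul_eq_mul, mul_one]
  rw [this]; exact f.map_smul c _

lemma filter_lt_erase_card_of_lt {F : Finset ℕ} {x y : ℕ} (hx : x ∈ F) (hxy : x < y) :
    ((F.erase x).filter (fun z => z < y)).card + 1 = (F.filter (fun z => z < y)).card := by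
  classical
  rw [Finset.filter_erase]
  have hmem : x ∈ F.filter (fun z => z < y) := Finset.mem_filter.2 ⟨hx, hxy⟩
  rw [Finset.card_erase_of_mem hmem]
  have : 1 ≤ (F.filter (fun z => z < y)).card := Finset.card_pos.2 ⟨x, hmem⟩
  omega

lemma filter_lt_erase_card_of_not_lt {F : Finset ℕ} {x y : ℕ} (hxy : ¬ x < y) :
    ((F.erase x).filter (fun z => z < y)).card = (F.filter (fun z => z < y)).card := by
  classical
  rw [Finset.filter_erase, Finset.erase_eq_of_notMem]
  simp [hxy]

lemma sgn_skew_aux {F : Finset ℕ} {x y : ℕ} (hx : x ∈ F) (hxy : x < y) :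
    sgn K F x * sgn K (F.erase x) y + sgn K F y * sgn K (F.erase y) x = 0 := by
  unfold sgn
  rw [filter_lt_erase_card_of_not_lt (by omega : ¬ y < x)]
  have h1 := filter_lt_erase_card_of_lt hx hxy
  rw [← h1, pow_succ]
  ring

lemma sgn_skew {F : Finset ℕ} {x y : ℕ} (hx : x ∈ F) (hy : y ∈ F) (hxy : x ≠ y) :
    sgn K F x * sgn K (F.erase x) y + sgn K F y * sgn K (F.erase y) x = 0 := by
  rcases hxy.lt_or_gt with h | h
  · exact sgn_skew_aux hx h
  · rw [add_comm]; exact sgn_skew_aux hy h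

lemma bdry_bdry (hDC : DC Δ) (a b c : ℤ) (z : SC.facesC Δ a →₀ K) :
    SC.bdry K Δ b c (SC.bdry K Δ a b z) = 0 := by
  classical
  suffices h : (SC.bdry K Δ b c) ∘ₗ (SC.bdry K Δ a b) = 0 by
    have := LinearMap.congr_fun h z
    simpa using this
  by_cases hab : b = a - 1
  · apply Finsupp.lhom_ext'
    intro F
    apply LinearMap.ext_ring
    simp only [LinearMap.comp_apply, LinearMap.coe_comp, Function.comp_apply,
      Finsupp.lsingle_apply, LinearMap.zero_apply]
    rw [bdry_single, map_sum]
    by_cases hbc : c = b - 1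
    · have hFcard : (F.1.card : ℤ) = a := F.2.2
      have step : ∀ x ∈ F.1,
          SC.bdry K Δ b c (term Δ b (F.1.erase x) (sgn K F.1 x)) =
          ∑ y ∈ F.1.erase x, term Δ c ((F.1.erase x).erase y)
            (sgn K F.1 x * sgn K (F.1.erase x) y) := by
        intro x hx
        have h1 : F.1.erase x ∈ Δ := hDC _ F.2.1 _ (Finset.erase_subset _ _)
        have h2 : (((F.1.erase x).card : ℤ)) = b := by
          rw [Finset.card_erase_of_mem hx]
          have : 1 ≤ F.1.card := Finset.card_pos.2 ⟨x, hx⟩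
          push_cast [this]
          omega
        rw [linmap_term _ _ _ h1 h2, bdry_single' h1 h2, Finset.smul_sum]
        refine Finset.sum_congr rfl fun y hy => ?_
        unfold term
        split
        · exact Finsupp.smul_single _ _ _
        · rw [smul_zero]
      rw [Finset.sum_congr rfl step, Finset.sum_sigma']
      refine Finset.sum_involution
        (fun p _ => ⟨p.2, p.1⟩) ?_ ?_ ?_ ?_
      · rintro ⟨x, y⟩ hp
        simp only [Finset.mem_sigma] at hp
        obtain ⟨hx, hy⟩ := hp
        have hyF : y ∈ F.1 := Finset.mem_of_mem_erase hy
        have hxy : y ≠ x := Finset.ne_of_mem_erase hy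
        have hcomm : (F.1.erase x).erase y = (F.1.erase y).erase x :=
          Finset.erase_right_comm
        rw [hcomm, term_add]
        rw [sgn_skew hx hyF (Ne.symm hxy), term_zero]
      · rintro ⟨x, y⟩ hp _
        simp only [Finset.mem_sigma] at hp
        have hxy : y ≠ x := Finset.ne_of_mem_erase hp.2
        intro heq
        exact hxy (congrArg Sigma.fst heq)
      · rintro ⟨x, y⟩ hp
        simp only [Finset.mem_sigma] at hp ⊢
        exact ⟨Finset.mem_of_mem_erase hp.2,
          Finset.mem_erase.2 ⟨(Finset.ne_of_mem_erase hp.2).symm, hp.1⟩⟩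
      · rintro ⟨x, y⟩ hp; rfl
    · -- c ≠ b - 1 : each term maps to zero
      rw [Finset.sum_eq_zero]
      intro x hx
      by_cases hcond : F.1.erase x ∈ Δ ∧ (((F.1.erase x).card : ℤ) = b)
      · rw [linmap_term _ _ _ hcond.1 hcond.2, bdry_single' hcond.1 hcond.2, Finset.sum_eq_zero, smul_zero]
        intro y hy
        refine term_eq_zero (fun hc => hbc ?_) _
        have hyc : y ∈ F.1.erase x := hy
        have e2 : (((F.1.erase x).erase y).card : ℤ) = b - 1 := by
          rw [Finset.card_erase_of_mem hyc]
          have hb1 : 1 ≤ (F.1.erase x).card := Finset.card_pos.2 ⟨y, hyc⟩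
          have := hcond.2
          push_cast [hb1]
          omega
        rw [← hc.2]
        exact e2
      · rw [term_eq_zero hcond, map_zero]
  · -- b ≠ a - 1 : first map is zero on singles
    apply Finsupp.lhom_ext'
    intro F
    apply LinearMap.ext_ring
    simp only [LinearMap.coe_comp, Function.comp_apply, Finsupp.lsingle_apply,
      LinearMap.zero_apply]
    rw [bdry_single, Finset.sum_eq_zero, map_zero]
    intro x hx
    refine term_eq_zero (fun hc => hab ?_) _
    have e2 : ((F.1.erase x).card : ℤ) = a - 1 := by
      rw [Finset.card_erase_of_mem hx]
      have hb1 : 1 ≤ F.1.card := Finset.card_pos.2 ⟨x, hx⟩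
      have := F.2.2
      push_cast [hb1]
      omega
    rw [← hc.2]
    exact e2


lemma sgn_sq (F : Finset ℕ) (x : ℕ) : sgn K F x * sgn K F x = 1 := by
  unfold sgn; rw [← mul_pow]; norm_num

lemma sgn_insert_self (F : Finset ℕ) (v : ℕ) : sgn K (insert v F) v = sgn K F v := by
  unfold sgn
  rw [Finset.filter_insert, if_neg (lt_irrefl v)]

lemma sgn_erase_self (F : Finset ℕ) (v : ℕ) : sgn K (F.erase v) v = sgn K F v := by
  unfold sgn
  rw [Finset.filter_erase, Finset.erase_eq_of_notMem (by simp)]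

lemma term_smul (Δ : Set (Finset ℕ)) (b : ℤ) (G : Finset ℕ) (c d : K) :
    c • term Δ b G d = term Δ b G (c * d) := by
  unfold term; split
  · exact Finsupp.smul_single _ _ _
  · rw [smul_zero]

lemma sgn_skew2 {F : Finset ℕ} {v x : ℕ} (hv : v ∉ F) (hx : x ∈ F) :
    sgn K F v * sgn K (insert v F) x + sgn K F x * sgn K (F.erase x) v = 0 := by
  have hxv : x ≠ v := fun h => hv (h ▸ hx)
  rcases Nat.lt_or_ge v x with h | h
  · have h1 : ((insert v F).filter (fun z => z < x)).card
        = (F.filter (fun z => z < x)).card + 1 := by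
      rw [Finset.filter_insert, if_pos h,
        Finset.card_insert_of_notMem (fun hc => hv (Finset.mem_filter.1 hc).1)]
    have h2 := filter_lt_erase_card_of_not_lt (F := F) (x := x) (y := v) (by omega)
    unfold sgn
    rw [h1, h2, pow_succ]
    ring
  · have hxlt : x < v := by omega
    have h1 : ((insert v F).filter (fun z => z < x)).card
        = (F.filter (fun z => z < x)).card := by
      rw [Finset.filter_insert, if_neg (by omega)]
    have h2 := filter_lt_erase_card_of_lt hx hxlt
    unfold sgn
    rw [h1, ← h2, pow_succ]
    ring

open Classical in
/-- chain homotopy candidate: `F ↦ ± (insert v F)`. -/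
noncomputable def hmap (K : Type) [Field K] (Δ : Set (Finset ℕ)) (v : ℕ) (a b : ℤ) :
    (SC.facesC Δ a →₀ K) →ₗ[K] (SC.facesC Δ b →₀ K) :=
  Finsupp.lsum K fun F => LinearMap.toSpanSingleton K _
    (if v ∈ F.1 then 0 else term Δ b (insert v F.1) (sgn K F.1 v))

lemma hmap_single {v : ℕ} {a b : ℤ} (F : SC.facesC Δ a) :
    hmap K Δ v a b (Finsupp.single F 1) =
      if v ∈ F.1 then 0 else term Δ b (insert v F.1) (sgn K F.1 v) := by
  rw [hmap, Finsupp.lsum_single, LinearMap.toSpanSingleton_apply, one_smul]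

lemma homotopy_single (hDC : DC Δ) {v : ℕ} {a b c : ℤ} (hb : b = a + 1) (hc : c = a - 1)
    (F : SC.facesC Δ a) (hins : v ∉ F.1 → insert v F.1 ∈ Δ) :
    SC.bdry K Δ b a (hmap K Δ v a b (Finsupp.single F 1))
      + hmap K Δ v c a (SC.bdry K Δ a c (Finsupp.single F 1)) = Finsupp.single F 1 := by
  classical
  have hFΔ : F.1 ∈ Δ := F.2.1
  have hFcard : (F.1.card : ℤ) = a := F.2.2
  by_cases hv : v ∈ F.1
  · -- second summand alone gives the identity
    rw [hmap_single, if_pos hv, map_zero, zero_add, bdry_single, map_sum]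
    have hstep : ∀ x ∈ F.1,
        hmap K Δ v c a (term Δ c (F.1.erase x) (sgn K F.1 x)) =
          if x = v then Finsupp.single F 1 else 0 := by
      intro x hx
      have h1 : F.1.erase x ∈ Δ := hDC _ hFΔ _ (Finset.erase_subset _ _)
      have h2 : ((F.1.erase x).card : ℤ) = c := by
        rw [Finset.card_erase_of_mem hx]
        have hb1 : 1 ≤ F.1.card := Finset.card_pos.2 ⟨x, hx⟩
        push_cast [hb1]; omega
      rw [linmap_term _ _ _ h1 h2, hmap_single ⟨_, h1, h2⟩]
      by_cases hxv : x = v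
      · subst hxv
        rw [if_neg (Finset.notMem_erase _ _), if_pos rfl]
        rw [Finset.insert_erase hv, term_smul, sgn_erase_self, sgn_sq]
        rw [term_eq_single hFΔ hFcard, Subtype.coe_eta F]; rfl
      · have : v ∈ F.1.erase x := Finset.mem_erase.2 ⟨Ne.symm hxv, hv⟩
        rw [if_pos this, smul_zero, if_neg hxv]
    rw [Finset.sum_congr rfl hstep, Finset.sum_ite_eq' F.1 v (fun _ => Finsupp.single F 1),
      if_pos hv]
  · -- v not in F
    have hGΔ : insert v F.1 ∈ Δ := hins hv
    have hGcard : ((insert v F.1).card : ℤ) = b := by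
      rw [Finset.card_insert_of_notMem hv]; push_cast; omega
    have hA : SC.bdry K Δ b a (hmap K Δ v a b (Finsupp.single F 1)) =
        Finsupp.single F 1 + ∑ x ∈ F.1, term Δ a (insert v (F.1.erase x))
          (sgn K F.1 v * sgn K (insert v F.1) x) := by
      rw [hmap_single, if_neg hv, linmap_term _ _ _ hGΔ hGcard, bdry_single' hGΔ hGcard,
        Finset.sum_insert hv, Finset.erase_insert hv, smul_add, term_smul,
        sgn_insert_self, sgn_sq, term_eq_single hFΔ hFcard, Subtype.coe_eta F,
        Finset.smul_sum]
      congr 1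
      refine Finset.sum_congr rfl fun x hx => ?_
      have hxv : v ≠ x := fun h => hv (h ▸ hx)
      rw [Finset.erase_insert_of_ne hxv, term_smul]
    have hB : hmap K Δ v c a (SC.bdry K Δ a c (Finsupp.single F 1)) =
        ∑ x ∈ F.1, term Δ a (insert v (F.1.erase x))
          (sgn K F.1 x * sgn K (F.1.erase x) v) := by
      rw [bdry_single, map_sum]
      refine Finset.sum_congr rfl fun x hx => ?_
      have h1 : F.1.erase x ∈ Δ := hDC _ hFΔ _ (Finset.erase_subset _ _)
      have h2 : ((F.1.erase x).card : ℤ) = c := by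
        rw [Finset.card_erase_of_mem hx]
        have hb1 : 1 ≤ F.1.card := Finset.card_pos.2 ⟨x, hx⟩
        push_cast [hb1]; omega
      rw [linmap_term _ _ _ h1 h2, hmap_single ⟨_, h1, h2⟩,
        if_neg (fun hc => hv (Finset.mem_of_mem_erase hc)), term_smul]
    rw [hA, hB, add_assoc, ← Finset.sum_add_distrib]
    have hz : ∀ x ∈ F.1, (term Δ a (insert v (F.1.erase x))
          (sgn K F.1 v * sgn K (insert v F.1) x) + term Δ a (insert v (F.1.erase x))
          (sgn K F.1 x * sgn K (F.1.erase x) v) : SC.facesC Δ a →₀ K) = 0 := by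
      intro x hx
      rw [term_add, sgn_skew2 hv hx, term_zero]
    rw [Finset.sum_congr rfl hz, Finset.sum_const_zero, add_zero]

lemma homotopy (hDC : DC Δ) {v : ℕ} {a b c : ℤ} (hb : b = a + 1) (hc : c = a - 1)
    (z : SC.facesC Δ a →₀ K)
    (hz : ∀ F ∈ z.support, v ∉ F.1 → insert v F.1 ∈ Δ) :
    SC.bdry K Δ b a (hmap K Δ v a b z) + hmap K Δ v c a (SC.bdry K Δ a c z) = z := by
  classical
  induction z using Finsupp.induction with
  | zero => simp
  | single_add F k w hFw hk ih =>
    have hdisj : Disjoint (Finsupp.single F k).support w.support := by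
      rw [Finsupp.support_single_ne_zero _ hk]
      exact Finset.disjoint_singleton_left.2 hFw
    have hsupp : (Finsupp.single F k + w).support
        = {F} ∪ w.support := by
      rw [Finsupp.support_add_eq hdisj, Finsupp.support_single_ne_zero _ hk]
    have hFmem : F ∈ (Finsupp.single F k + w).support := by
      rw [hsupp]; exact Finset.mem_union_left _ (Finset.mem_singleton_self F)
    have ihw := ih (fun G hG => hz G (by rw [hsupp]; exact Finset.mem_union_right _ hG))
    have hFc := hz F hFmem
    have hsingle : SC.bdry K Δ b a (hmap K Δ v a b (Finsupp.single F k))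
        + hmap K Δ v c a (SC.bdry K Δ a c (Finsupp.single F k)) = Finsupp.single F k := by
      have h1 := homotopy_single (K := K) hDC hb hc F hFc
      have e : (Finsupp.single F k) = k • Finsupp.single F 1 := by
        rw [Finsupp.smul_single, smul_eq_mul, mul_one]
      rw [e, map_smul, map_smul, map_smul, map_smul, ← smul_add, h1]
    rw [map_add, map_add, map_add, map_add, add_add_add_comm, hsingle, ihw]

lemma facesC_finite (hΔ : Δ.Finite) (c : ℤ) : Finite (SC.facesC Δ c) := by
  have : Finite ↥Δ := hΔ.to_subtype
  refine Finite.of_injective (fun F => (⟨F.1, F.2.1⟩ : ↥Δ)) ?_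
  intro F G h
  simp only [Subtype.mk.injEq] at h
  exact Subtype.ext h

lemma facesC_fd (hΔ : Δ.Finite) (c : ℤ) :
    FiniteDimensional K (SC.facesC Δ c →₀ K) := by
  have h1 := facesC_finite hΔ c
  have h2 : Fintype (SC.facesC Δ c) := Fintype.ofFinite _
  exact Module.Finite.equiv (Finsupp.linearEquivFunOnFinite K K _).symm

lemma cone_hdim (hDC : DC Δ) (hfin : Δ.Finite) (v : ℕ)
    (hcone : ∀ F ∈ Δ, insert v F ∈ Δ) (ℓ : ℤ) : SC.hdim K Δ ℓ = 0 := by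
  have hker : LinearMap.ker (SC.bdry K Δ (ℓ+1) ℓ)
      ≤ LinearMap.range (SC.bdry K Δ (ℓ+2) (ℓ+1)) := by
    intro z hzz
    have h := homotopy (K := K) hDC (v := v) (a := ℓ+1) (b := ℓ+2) (c := ℓ)
      (by ring) (by ring) z (fun F _ _ => hcone F.1 F.2.1)
    rw [LinearMap.mem_ker.1 hzz, map_zero, add_zero] at h
    exact ⟨_, h⟩
  have hfd := facesC_fd (K := K) (Δ := Δ) hfin (ℓ+1)
  unfold SC.hdim
  have h2 : Module.finrank K (LinearMap.ker (SC.bdry K Δ (ℓ+1) ℓ))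
      ≤ Module.finrank K (LinearMap.range (SC.bdry K Δ (ℓ+2) (ℓ+1))) :=
    Submodule.finrank_mono hker
  omega


/-- sign for moving the block `B` out of a face -/
def eps (K : Type) [Field K] (B G : Finset ℕ) : K :=
  (-1 : K) ^ (∑ g ∈ G, (B.filter (fun y => y < g)).card)

lemma eps_sq (B G : Finset ℕ) : eps K B G * eps K B G = 1 := by
  unfold eps; rw [← mul_pow]; norm_num

lemma eps_factor {B G : Finset ℕ} {x : ℕ} (hx : x ∈ G) :
    eps K B G = eps K B (G.erase x) * (-1:K)^(B.filter (fun y => y < x)).card := by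
  unfold eps
  rw [← Finset.sum_erase_add G _ hx, pow_add]

lemma sgn_subset_decomp {B F : Finset ℕ} (hBF : B ⊆ F) (x : ℕ) :
    sgn K F x = sgn K (F \ B) x * (-1:K)^(B.filter (fun y => y < x)).card := by
  unfold sgn
  have hdisj : Disjoint ((F\B).filter (fun y => y < x)) (B.filter (fun y => y < x)) :=
    Disjoint.mono (Finset.filter_subset _ _) (Finset.filter_subset _ _) Finset.sdiff_disjoint
  have hcard : (F.filter (fun y => y < x)).card
      = ((F\B).filter (fun y => y < x)).card + (B.filter (fun y => y < x)).card := by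
    rw [← Finset.card_union_of_disjoint hdisj, ← Finset.filter_union,
      Finset.sdiff_union_of_subset hBF]
  rw [hcard, pow_add]

open Classical in
noncomputable def pimap (K : Type) [Field K] (Δ Δ'' : Set (Finset ℕ)) (B : Finset ℕ)
    (a a'' : ℤ) : (SC.facesC Δ a →₀ K) →ₗ[K] (SC.facesC Δ'' a'' →₀ K) :=
  Finsupp.lsum K fun F => LinearMap.toSpanSingleton K _
    (if B ⊆ F.1 then term Δ'' a'' (F.1 \ B) (eps K B (F.1 \ B)) else 0)

noncomputable def smap (K : Type) [Field K] (Δ Δ'' : Set (Finset ℕ)) (B : Finset ℕ)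
    (a'' a : ℤ) : (SC.facesC Δ'' a'' →₀ K) →ₗ[K] (SC.facesC Δ a →₀ K) :=
  Finsupp.lsum K fun G => LinearMap.toSpanSingleton K _
    (term Δ a (B ∪ G.1) (eps K B G.1))

lemma pimap_single {B : Finset ℕ} {a a'' : ℤ} (F : SC.facesC Δ a) :
    pimap K Δ Δ'' B a a'' (Finsupp.single F 1) =
      if B ⊆ F.1 then term Δ'' a'' (F.1 \ B) (eps K B (F.1 \ B)) else 0 := by
  rw [pimap, Finsupp.lsum_single, LinearMap.toSpanSingleton_apply, one_smul]

lemma pimap_single' {B : Finset ℕ} {a a'' : ℤ} {G : Finset ℕ}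
    (h1 : G ∈ Δ) (h2 : (G.card : ℤ) = a) :
    pimap K Δ Δ'' B a a'' (Finsupp.single (⟨G, h1, h2⟩ : SC.facesC Δ a) 1) =
      if B ⊆ G then term Δ'' a'' (G \ B) (eps K B (G \ B)) else 0 :=
  pimap_single _

lemma smap_single {B : Finset ℕ} {a a'' : ℤ} (G : SC.facesC Δ'' a'') :
    smap K Δ Δ'' B a'' a (Finsupp.single G 1) = term Δ a (B ∪ G.1) (eps K B G.1) := by
  rw [smap, Finsupp.lsum_single, LinearMap.toSpanSingleton_apply, one_smul]

section Reduce

variable {Δ'' : Set (Finset ℕ)} {B : Finset ℕ} {v : ℕ}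

lemma pimap_chain (hDC : DC Δ)
    (hi : ∀ F ∈ Δ, B ⊆ F → F \ B ∈ Δ'')
    {a b a'' b'' : ℤ} (hb : b = a - 1) (hb'' : b'' = a'' - 1)
    (he : a'' = a - B.card) :
    (SC.bdry K Δ'' a'' b'') ∘ₗ pimap K Δ Δ'' B a a''
      = pimap K Δ Δ'' B b b'' ∘ₗ SC.bdry K Δ a b := by
  classical
  apply Finsupp.lhom_ext'
  intro F
  apply LinearMap.ext_ring
  simp only [LinearMap.coe_comp, Function.comp_apply, Finsupp.lsingle_apply]
  have hFΔ : F.1 ∈ Δ := F.2.1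
  have hFcard : (F.1.card : ℤ) = a := F.2.2
  have hstep : ∀ x ∈ F.1,
      pimap K Δ Δ'' B b b'' (term Δ b (F.1.erase x) (sgn K F.1 x)) =
        if B ⊆ F.1.erase x then
          term Δ'' b'' ((F.1.erase x) \ B) (sgn K F.1 x * eps K B ((F.1.erase x) \ B))
        else 0 := by
    intro x hx
    have h1 : F.1.erase x ∈ Δ := hDC _ hFΔ _ (Finset.erase_subset _ _)
    have h2 : ((F.1.erase x).card : ℤ) = b := by
      rw [Finset.card_erase_of_mem hx]
      have hb1 : 1 ≤ F.1.card := Finset.card_pos.2 ⟨x, hx⟩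
      push_cast [hb1]; omega
    rw [linmap_term _ _ _ h1 h2, pimap_single' h1 h2]
    split
    · rw [term_smul]
    · rw [smul_zero]
  by_cases hBF : B ⊆ F.1
  · rw [pimap_single, if_pos hBF]
    have h1 : F.1 \ B ∈ Δ'' := hi _ hFΔ hBF
    have h2 : ((F.1 \ B).card : ℤ) = a'' := by
      rw [Finset.card_sdiff_of_subset hBF]
      have : B.card ≤ F.1.card := Finset.card_le_card hBF
      push_cast [this]; omega
    rw [linmap_term _ _ _ h1 h2, bdry_single' h1 h2, bdry_single, map_sum,
      Finset.sum_congr rfl hstep]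
    rw [Finset.smul_sum]
    rw [← Finset.sum_subset (Finset.sdiff_subset : F.1 \ B ⊆ F.1)]
    · refine Finset.sum_congr rfl fun x hx => ?_
      have hxB : x ∉ B := (Finset.mem_sdiff.1 hx).2
      have hxF : x ∈ F.1 := (Finset.mem_sdiff.1 hx).1
      have hBe : B ⊆ F.1.erase x := fun y hy =>
        Finset.mem_erase.2 ⟨fun hyx => hxB (hyx ▸ hy), hBF hy⟩
      rw [if_pos hBe, Finset.erase_sdiff_comm, term_smul]
      congr 1
      rw [sgn_subset_decomp hBF x, eps_factor (Finset.mem_sdiff.2 ⟨hxF, hxB⟩)]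
      ring
    · intro x hxF hxnB
      have hxB : x ∈ B := by
        by_contra hc
        exact hxnB (Finset.mem_sdiff.2 ⟨hxF, hc⟩)
      rw [if_neg (fun hc => Finset.notMem_erase x F.1 (hc hxB))]
  · rw [pimap_single, if_neg hBF, map_zero, bdry_single, map_sum,
      Finset.sum_congr rfl hstep, Finset.sum_eq_zero]
    intro x hx
    rw [if_neg (fun hc => hBF (hc.trans (Finset.erase_subset _ _)))]

lemma pimap_smap
    (hii : ∀ G ∈ Δ'', B ∪ G ∈ Δ)
    (hdisjBG : ∀ G ∈ Δ'', Disjoint B G)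
    {a a'' : ℤ} (he : a'' = a - B.card) (g : SC.facesC Δ'' a'' →₀ K) :
    pimap K Δ Δ'' B a a'' (smap K Δ Δ'' B a'' a g) = g := by
  classical
  suffices h : (pimap K Δ Δ'' B a a'') ∘ₗ (smap K Δ Δ'' B a'' a)
      = LinearMap.id (R := K) by
    have := LinearMap.congr_fun h g
    simpa using this
  apply Finsupp.lhom_ext'
  intro G
  apply LinearMap.ext_ring
  simp only [LinearMap.coe_comp, Function.comp_apply, Finsupp.lsingle_apply,
    LinearMap.id_coe, id_eq]
  have hG : G.1 ∈ Δ'' := G.2.1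
  have h1 : B ∪ G.1 ∈ Δ := hii _ hG
  have hdj : Disjoint B G.1 := hdisjBG _ hG
  have h2 : ((B ∪ G.1).card : ℤ) = a := by
    rw [Finset.card_union_of_disjoint hdj]
    have := G.2.2
    push_cast; omega
  rw [smap_single, linmap_term _ _ _ h1 h2, pimap_single' h1 h2,
    if_pos Finset.subset_union_left, Finset.union_sdiff_cancel_left hdj,
    term_smul, eps_sq, term_eq_single hG G.2.2, Subtype.coe_eta G]; rfl

lemma pimap_ker_support
    (hi : ∀ F ∈ Δ, B ⊆ F → F \ B ∈ Δ'')
    {a a'' : ℤ} (he : a'' = a - B.card) (z : SC.facesC Δ a →₀ K)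
    (hz : pimap K Δ Δ'' B a a'' z = 0) :
    ∀ F ∈ z.support, ¬ B ⊆ F.1 := by
  classical
  intro F hF hBF
  have hFΔ : F.1 ∈ Δ := F.2.1
  have h1 : F.1 \ B ∈ Δ'' := hi _ hFΔ hBF
  have h2 : ((F.1 \ B).card : ℤ) = a'' := by
    rw [Finset.card_sdiff_of_subset hBF]
    have hc := Finset.card_le_card hBF
    have := F.2.2
    push_cast [hc]; omega
  set G₀ : SC.facesC Δ'' a'' := ⟨F.1 \ B, h1, h2⟩ with hG₀
  have happ : (pimap K Δ Δ'' B a a'' z) G₀ = z F * eps K B (F.1 \ B) := by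
    rw [pimap, Finsupp.lsum_apply, Finsupp.sum_apply]
    rw [Finsupp.sum]
    rw [Finset.sum_eq_single_of_mem F hF]
    · rw [LinearMap.toSpanSingleton_apply, if_pos hBF,
        term_eq_single h1 h2]
      exact (Finsupp.smul_apply _ _ _).trans (congrArg (z F • ·) Finsupp.single_eq_same)
    · intro F' hF' hne
      rw [LinearMap.toSpanSingleton_apply]
      by_cases hBF' : B ⊆ F'.1
      · have h1' : F'.1 \ B ∈ Δ'' := hi _ F'.2.1 hBF'
        have h2' : ((F'.1 \ B).card : ℤ) = a'' := by
          rw [Finset.card_sdiff_of_subset hBF']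
          have hc := Finset.card_le_card hBF'
          have := F'.2.2
          push_cast [hc]; omega
        rw [if_pos hBF', term_eq_single h1' h2']
        refine (Finsupp.smul_apply _ _ _).trans
          ((congrArg (z F' • ·) (Finsupp.single_eq_of_ne' ?_)).trans (smul_zero _))
        intro hcontra
        apply hne
        have hset : F'.1 \ B = F.1 \ B := congrArg Subtype.val hcontra
        have : F'.1 = F.1 := by
          rw [← Finset.union_sdiff_of_subset hBF', hset,
            Finset.union_sdiff_of_subset hBF]
        exact Subtype.ext this
      · rw [if_neg hBF', smul_zero, Finsupp.coe_zero, Pi.zero_apply]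
  rw [hz] at happ
  simp only [Finsupp.coe_zero, Pi.zero_apply] at happ
  have hzF : z F ≠ 0 := Finsupp.mem_support_iff.1 hF
  have heps : eps K B (F.1 \ B) ≠ 0 := by
    unfold eps
    apply pow_ne_zero
    simp
  exact heps (by
    rcases mul_eq_zero.1 happ.symm with h | h
    · exact absurd h hzF
    · exact h)

lemma range_le_ker (hDC : DC Δ) (ℓ : ℤ) :
    LinearMap.range (SC.bdry K Δ (ℓ+2) (ℓ+1)) ≤ LinearMap.ker (SC.bdry K Δ (ℓ+1) ℓ) := by
  rintro _ ⟨y, rfl⟩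
  exact LinearMap.mem_ker.2 (bdry_bdry hDC _ _ _ y)

lemma hdim_eq_zero_iff (hDC : DC Δ) (hfin : Δ.Finite) (ℓ : ℤ) :
    SC.hdim K Δ ℓ = 0 ↔ LinearMap.ker (SC.bdry K Δ (ℓ+1) ℓ)
      ≤ LinearMap.range (SC.bdry K Δ (ℓ+2) (ℓ+1)) := by
  have hfd := facesC_fd (K := K) (Δ := Δ) hfin (ℓ+1)
  unfold SC.hdim
  constructor
  · intro h0
    have hle : Module.finrank K (LinearMap.ker (SC.bdry K Δ (ℓ+1) ℓ))
        ≤ Module.finrank K (LinearMap.range (SC.bdry K Δ (ℓ+2) (ℓ+1))) :=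
      Nat.sub_eq_zero_iff_le.1 h0
    have := Submodule.eq_of_le_of_finrank_le (range_le_ker hDC ℓ) hle
    rw [← this]
  · intro hle
    have := Submodule.finrank_mono hle
    omega

lemma reduce_hdim (hDC : DC Δ) (hDC'' : DC Δ'') (hfin : Δ.Finite) (hfin'' : Δ''.Finite)
    (hi : ∀ F ∈ Δ, B ⊆ F → F \ B ∈ Δ'')
    (hii : ∀ G ∈ Δ'', B ∪ G ∈ Δ)
    (hdisjBG : ∀ G ∈ Δ'', Disjoint B G)
    (hiii : ∀ F ∈ Δ, ¬ B ⊆ F → insert v F ∈ Δ)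
    {ℓ ℓ'' : ℤ} (he : ℓ'' = ℓ - B.card)
    (hne : SC.hdim K Δ ℓ ≠ 0) : SC.hdim K Δ'' ℓ'' ≠ 0 := by
  classical
  intro h0
  apply hne
  rw [hdim_eq_zero_iff hDC hfin]
  have hker'' := (hdim_eq_zero_iff (K := K) hDC'' hfin'' ℓ'').1 h0
  have heq'' : LinearMap.range (SC.bdry K Δ'' (ℓ''+2) (ℓ''+1))
      = LinearMap.ker (SC.bdry K Δ'' (ℓ''+1) ℓ'') := by
    have hfd := facesC_fd (K := K) (Δ := Δ'') hfin'' (ℓ''+1)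
    exact Submodule.eq_of_le_of_finrank_le (range_le_ker hDC'' ℓ'')
      (Submodule.finrank_mono hker'')
  intro z hz
  have hz0 : SC.bdry K Δ (ℓ+1) ℓ z = 0 := LinearMap.mem_ker.1 hz
  have hch1 := LinearMap.congr_fun (pimap_chain (K := K) (Δ'' := Δ'') (B := B) hDC hi
    (a := ℓ+1) (b := ℓ) (a'' := ℓ''+1) (b'' := ℓ'') (by ring) (by ring) (by omega)) z
  simp only [LinearMap.coe_comp, Function.comp_apply] at hch1
  rw [hz0, map_zero] at hch1
  have hmem : pimap K Δ Δ'' B (ℓ+1) (ℓ''+1) z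
      ∈ LinearMap.range (SC.bdry K Δ'' (ℓ''+2) (ℓ''+1)) := by
    rw [heq'']
    exact LinearMap.mem_ker.2 hch1
  obtain ⟨g, hg⟩ := hmem
  set w := smap K Δ Δ'' B (ℓ''+2) (ℓ+2) g with hw
  have hsw : pimap K Δ Δ'' B (ℓ+2) (ℓ''+2) w = g :=
    pimap_smap hii hdisjBG (by omega) g
  set x := z - SC.bdry K Δ (ℓ+2) (ℓ+1) w with hx
  have hx0 : pimap K Δ Δ'' B (ℓ+1) (ℓ''+1) x = 0 := by
    rw [hx, map_sub]
    have hch2 := LinearMap.congr_fun (pimap_chain (K := K) (Δ'' := Δ'') (B := B) hDC hi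
      (a := ℓ+2) (b := ℓ+1) (a'' := ℓ''+2) (b'' := ℓ''+1) (by ring) (by ring) (by omega)) w
    simp only [LinearMap.coe_comp, Function.comp_apply] at hch2
    rw [← hch2, hsw, hg, sub_self]
  have hxsupp := pimap_ker_support hi (by omega : (ℓ''+1 : ℤ) = (ℓ+1) - B.card) x hx0
  have hxker : SC.bdry K Δ (ℓ+1) ℓ x = 0 := by
    rw [hx, map_sub, hz0, bdry_bdry hDC, sub_self]
  have hhom := homotopy (K := K) hDC (v := v) (a := ℓ+1) (b := ℓ+2) (c := ℓ)
    (by ring) (by ring) x (fun F hF _ => hiii F.1 F.2.1 (hxsupp F hF))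
  rw [hxker, map_zero, add_zero] at hhom
  refine ⟨w + hmap K Δ v (ℓ+1) (ℓ+2) x, ?_⟩
  rw [map_add, hhom, hx]
  abel

end Reduce


/-! ### combinatorial layer -/

lemma rep_mod {n s a : ℕ} (hn : 0 < n) (hs : s ≤ a + n) (ha : a < n) :
    a = (s + ((a + n - s) % n)) % n := by
  rw [Nat.add_mod_mod, show s + (a + n - s) = a + n from by omega,
    Nat.add_mod_right, Nat.mod_eq_of_lt ha]

lemma el_mod {n s o : ℕ} : (s + o) % n = (s + o % n) % n :=
  (Nat.add_mod_mod s o n).symm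

lemma el_eq_iff {n s i j : ℕ} : (s + i) % n = (s + j) % n ↔ i % n = j % n :=
  ⟨fun h => Nat.ModEq.add_left_cancel' s h, fun h => Nat.ModEq.add_left s h⟩

lemma el_inj {n s i j : ℕ} (hi : i < n) (hj : j < n)
    (h : (s + i) % n = (s + j) % n) : i = j := by
  have := el_eq_iff.1 h
  rwa [Nat.mod_eq_of_lt hi, Nat.mod_eq_of_lt hj] at this

lemma cycForm_shift (n t s δ : ℕ) :
    cycForm n t ((s + δ) % n) = (Finset.range t).image (fun k => (s + (δ + k)) % n) := by
  unfold cycForm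
  apply Finset.image_congr
  intro k _
  simp only
  rw [Nat.mod_add_mod, add_assoc]

lemma mem_cycForm {n t a x : ℕ} : x ∈ cycForm n t a ↔ ∃ k < t, (a + k) % n = x := by
  unfold cycForm
  simp [Finset.mem_image, Finset.mem_range]

def Δw (n t : ℕ) (W : Finset ℕ) : Set (Finset ℕ) :=
  {F | F ∈ SRcomplex n (cycFacets n t) ∧ F ⊆ W}

lemma mem_Δw_iff {n t : ℕ} {W F : Finset ℕ} :
    F ∈ Δw n t W ↔ (F ⊆ Finset.range n ∧ ∀ a < n, ¬ cycForm n t a ⊆ F) ∧ F ⊆ W := by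
  unfold Δw SRcomplex
  constructor
  · rintro ⟨⟨h1, h2⟩, h3⟩
    refine ⟨⟨h1, fun a ha hsub => h2 ⟨cycForm n t a, ?_, hsub⟩⟩, h3⟩
    exact Finset.mem_image_of_mem _ (Finset.mem_range.2 ha)
  · rintro ⟨⟨h1, h2⟩, h3⟩
    refine ⟨⟨h1, ?_⟩, h3⟩
    rintro ⟨G, hG, hsub⟩
    obtain ⟨a, ha, rfl⟩ := Finset.mem_image.1 hG
    exact h2 a (Finset.mem_range.1 ha) hsub

lemma Δw_DC {n t : ℕ} {W : Finset ℕ} : DC (Δw n t W) := by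
  intro F hF G hGF
  rw [mem_Δw_iff] at hF ⊢
  exact ⟨⟨hGF.trans hF.1.1, fun a ha hsub => hF.1.2 a ha (hsub.trans hGF)⟩,
    hGF.trans hF.2⟩

lemma Δw_finite {n t : ℕ} {W : Finset ℕ} : (Δw n t W).Finite := by
  apply Set.Finite.subset (W.powerset : Finset (Finset ℕ)).finite_toSet
  intro F hF
  simp only [Finset.coe_powerset, Set.mem_preimage, Set.mem_powerset_iff,
    Finset.coe_subset]
  exact (mem_Δw_iff.1 hF).2

lemma cross {Q : ℕ → Prop} {u v : ℕ} (huv : u ≤ v) (hu : Q u) (hv : ¬ Q v) :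
    ∃ k, u ≤ k ∧ k < v ∧ Q k ∧ ¬ Q (k + 1) := by
  by_contra hcon
  push_neg at hcon
  have hstep : ∀ k, u ≤ k → k ≤ v → Q k := by
    intro k hk1
    induction k, hk1 using Nat.le_induction with
    | base => intro _; exact hu
    | succ k hk ihk =>
      intro hkv
      exact hcon k hk (by omega) (ihk (by omega))
  exact hv (hstep v huv le_rfl)

lemma hdim_Δw_empty {n t : ℕ} {ℓ : ℤ} (hℓ : 0 ≤ ℓ) : SC.hdim K (Δw n t ∅) ℓ = 0 := by
  have hie : IsEmpty (SC.facesC (Δw n t ∅) (ℓ + 1)) := by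
    constructor
    rintro ⟨F, hF, hcard⟩
    have hsub : F ⊆ ∅ := (mem_Δw_iff.1 hF).2
    rw [Finset.subset_empty.1 hsub] at hcard
    simp at hcard
    omega
  have hss : Subsingleton (SC.facesC (Δw n t ∅) (ℓ + 1) →₀ K) := by
    constructor
    intro f g
    ext a
    exact (hie.false a).elim
  have h0 : Module.finrank K
      (LinearMap.ker (SC.bdry K (Δw n t ∅) (ℓ + 1) ℓ)) = 0 := by
    have : Subsingleton (LinearMap.ker (SC.bdry K (Δw n t ∅) (ℓ + 1) ℓ)) := by
      constructor; intro a b; exact Subtype.ext (Subsingleton.elim _ _)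
    exact Module.finrank_zero_of_subsingleton
  unfold SC.hdim
  omega

def segs (n : ℕ) (W : Finset ℕ) : ℕ :=
  (W.filter (fun x => (x + (n - 1)) % n ∉ W)).card

lemma exists_gap {n : ℕ} {W : Finset ℕ} (hn : 0 < n) (hWr : W ⊆ Finset.range n)
    (hWn : W.card < n) (hW0 : W.Nonempty) :
    ∃ x ∈ W, (x + (n - 1)) % n ∉ W := by
  obtain ⟨w₀, hw₀⟩ := hW0
  have hw₀n : w₀ < n := Finset.mem_range.1 (hWr hw₀)
  have hssub : ∃ x₀, x₀ < n ∧ x₀ ∉ W := by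
    by_contra hcon
    push_neg at hcon
    have : Finset.range n ⊆ W := fun x hx => hcon x (Finset.mem_range.1 hx)
    have := Finset.card_le_card this
    rw [Finset.card_range] at this
    omega
  obtain ⟨x₀, hx₀n, hx₀W⟩ := hssub
  have hex : ∃ j, (x₀ + 1 + j) % n ∈ W := by
    refine ⟨(w₀ + n - (x₀ + 1)) % n, ?_⟩
    rw [← rep_mod hn (by omega) hw₀n]
    exact hw₀
  set j₀ := Nat.find hex with hj₀
  refine ⟨(x₀ + 1 + j₀) % n, Nat.find_spec hex, ?_⟩
  have he1 : ((x₀ + 1 + j₀) % n + (n - 1)) % n = (x₀ + j₀) % n := by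
    rw [Nat.mod_add_mod]
    have : x₀ + 1 + j₀ + (n - 1) = x₀ + j₀ + n := by omega
    rw [this, Nat.add_mod_right]
  rw [he1]
  rcases Nat.eq_zero_or_pos j₀ with hj | hj
  · rw [hj]
    simpa [Nat.mod_eq_of_lt hx₀n] using hx₀W
  · have : x₀ + j₀ = x₀ + 1 + (j₀ - 1) := by omega
    rw [this]
    exact Nat.find_min hex (by omega)


lemma succ_pred_mod {n x : ℕ} (hn : 1 ≤ n) (hx : x < n) :
    ((x + (n - 1)) % n + 1) % n = x := by
  rw [Nat.mod_add_mod, show x + (n-1) + 1 = x + n from by omega,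
    Nat.add_mod_right, Nat.mod_eq_of_lt hx]

lemma insert_s0_mem {n t : ℕ} {W F : Finset ℕ} {s₀ : ℕ} (hn2 : 2 ≤ n) (htn : t ≤ n)
    (hW : W ⊆ Finset.range n) (hs₀W : s₀ ∈ W) (hpred : (s₀ + (n - 1)) % n ∉ W)
    (hF : F ∈ Δw n t W) (hstart : ¬ cycForm n t s₀ ⊆ insert s₀ F) :
    insert s₀ F ∈ Δw n t W := by
  have hs₀n : s₀ < n := Finset.mem_range.1 (hW hs₀W)
  obtain ⟨⟨hFr, hFrun⟩, hFW⟩ := mem_Δw_iff.1 hF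
  refine mem_Δw_iff.2 ⟨⟨Finset.insert_subset (Finset.mem_range.2 hs₀n) hFr, ?_⟩,
    Finset.insert_subset hs₀W hFW⟩
  intro a ha hR
  by_cases hs₀R : s₀ ∈ cycForm n t a
  · have hrep := rep_mod (n := n) (s := s₀) (a := a) (by omega) (by omega) ha
    set D := (a + n - s₀) % n with hD
    have hDn : D < n := Nat.mod_lt _ (by omega)
    have hform := cycForm_shift n t s₀ D
    rw [← hrep] at hform
    rw [hform] at hs₀R hR
    obtain ⟨k, hkr, hk⟩ := Finset.mem_image.1 hs₀R
    have hkt : k < t := Finset.mem_range.1 hkr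
    have h0 : (D + k) % n = 0 := by
      have h1 : (s₀ + (D + k)) % n = (s₀ + 0) % n := by
        rw [hk]; simp [Nat.mod_eq_of_lt hs₀n]
      have h2 := el_eq_iff.1 h1
      simpa using h2
    obtain ⟨c, hc⟩ := Nat.dvd_of_mod_eq_zero h0
    have hc1 : c ≤ 1 := by
      by_contra hcon
      push_neg at hcon
      have : n * 2 ≤ n * c := Nat.mul_le_mul_left n hcon
      omega
    interval_cases c
    · -- D = 0, a = s₀
      have hD0 : D = 0 := by omega
      have has : a = s₀ := by
        rw [hrep, hD0, Nat.add_zero, Nat.mod_eq_of_lt hs₀n]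
      apply hstart
      rw [has] at hform
      rw [hform]
      exact hR
    · -- D + k = n : the predecessor of s₀ lies in the run
      have hk1 : 1 ≤ k := by omega
      have hpredR : (s₀ + (n - 1)) % n ∈ insert s₀ F := by
        apply hR
        refine Finset.mem_image.2 ⟨k - 1, Finset.mem_range.2 (by omega), ?_⟩
        congr 1
        omega
      rcases Finset.mem_insert.1 hpredR with h | h
      · have h1 : (s₀ + (n - 1)) % n = (s₀ + 0) % n := by
          rw [h]; simp [Nat.mod_eq_of_lt hs₀n]
        have h2 := el_eq_iff.1 h1
        rw [Nat.mod_eq_of_lt (show n - 1 < n by omega), Nat.zero_mod] at h2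
        omega
      · exact hpred (hFW h)
  · refine hFrun a ha (fun x hx => ?_)
    rcases Finset.mem_insert.1 (hR hx) with h | h
    · exact absurd (h ▸ hx) hs₀R
    · exact h

section Step

variable {n t : ℕ} {W : Finset ℕ} {s₀ m : ℕ}

/-- context for the reduction step -/
structure Ctx (n t : ℕ) (W : Finset ℕ) (s₀ m : ℕ) : Prop where
  ht2 : 2 ≤ t
  htn' : t < n
  hW : W ⊆ Finset.range n
  hs₀W : s₀ ∈ W
  hpred : (s₀ + (n - 1)) % n ∉ W
  hmW : ∀ i < m, (s₀ + i) % n ∈ W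
  hmspec : (s₀ + m) % n ∉ W
  hm1 : 1 ≤ m
  hmn : m ≤ n - 1
  htm : t ≤ m

variable (C : Ctx n t W s₀ m)
include C

def blockB (n t s₀ : ℕ) : Finset ℕ := (Finset.range (t-1)).image (fun k => (s₀ + (1+k)) % n)

def chunkC (n t s₀ : ℕ) : Finset ℕ := (Finset.range (t+1)).image (fun k => (s₀ + k) % n)

lemma Ctx.hn2 : 2 ≤ n := by have := C.ht2; have := C.htn'; omega

lemma Ctx.hs₀n : s₀ < n := Finset.mem_range.1 (C.hW C.hs₀W)

lemma Ctx.memB {o : ℕ} : (s₀ + o) % n ∈ blockB n t s₀ ↔ (1 ≤ o % n ∧ o % n ≤ t - 1) := by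
  constructor
  · intro hx
    obtain ⟨j, hj, hje⟩ := Finset.mem_image.1 hx
    have hjt : j < t - 1 := Finset.mem_range.1 hj
    have h2 := el_eq_iff.1 hje
    rw [Nat.mod_eq_of_lt (show 1 + j < n by have := C.htn'; omega)] at h2
    omega
  · rintro ⟨h1, h2⟩
    refine Finset.mem_image.2 ⟨o % n - 1, Finset.mem_range.2 (by omega), ?_⟩
    rw [show 1 + (o % n - 1) = o % n from by omega]
    exact el_mod.symm

lemma Ctx.memC {o : ℕ} : (s₀ + o) % n ∈ chunkC n t s₀ ↔ o % n ≤ t := by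
  constructor
  · intro hx
    obtain ⟨j, hj, hje⟩ := Finset.mem_image.1 hx
    have hjt : j < t + 1 := Finset.mem_range.1 hj
    have h2 := el_eq_iff.1 hje
    rw [Nat.mod_eq_of_lt (show j < n by have := C.htn'; omega)] at h2
    omega
  · intro h
    refine Finset.mem_image.2 ⟨o % n, Finset.mem_range.2 (by omega), ?_⟩
    exact el_mod.symm

lemma Ctx.s₀memC : s₀ ∈ chunkC n t s₀ := by
  have h := (C.memC (o := 0)).2 (by simp)
  simpa [Nat.mod_eq_of_lt C.hs₀n] using h

lemma Ctx.BsubC : blockB n t s₀ ⊆ chunkC n t s₀ := by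
  intro x hx
  obtain ⟨j, hj, rfl⟩ := Finset.mem_image.1 hx
  have hjt : j < t - 1 := Finset.mem_range.1 hj
  exact C.memC.2 (by rw [Nat.mod_eq_of_lt (show 1 + j < n by have := C.htn'; omega)]; omega)

lemma Ctx.BsubW : blockB n t s₀ ⊆ W := by
  intro x hx
  obtain ⟨j, hj, rfl⟩ := Finset.mem_image.1 hx
  have hjt : j < t - 1 := Finset.mem_range.1 hj
  exact C.hmW (1+j) (by have := C.htm; omega)

lemma Ctx.Bcard : (blockB n t s₀).card = t - 1 := by
  rw [blockB, Finset.card_image_of_injOn, Finset.card_range]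
  intro i hi j hj hij
  simp only [Finset.coe_range, Set.mem_Iio] at hi hj
  have := el_inj (show 1 + i < n by have := C.htn'; omega)
    (show 1 + j < n by have := C.htn'; omega) hij
  omega

/-- Every face of `Δw n t W` not containing the block stays a face upon inserting `s₀`. -/
lemma Ctx.fact_iii : ∀ F ∈ Δw n t W, ¬ blockB n t s₀ ⊆ F → insert s₀ F ∈ Δw n t W := by
  intro F hF hBF
  refine insert_s0_mem C.hn2 (le_of_lt C.htn') C.hW C.hs₀W C.hpred hF ?_
  intro hsub
  apply hBF
  intro x hx
  obtain ⟨j, hj, rfl⟩ := Finset.mem_image.1 hx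
  have hjt : j < t - 1 := Finset.mem_range.1 hj
  have hmem : (s₀ + (1+j)) % n ∈ cycForm n t s₀ := mem_cycForm.2 ⟨1+j, by omega, rfl⟩
  rcases Finset.mem_insert.1 (hsub hmem) with h | h
  · exfalso
    have h1 : (s₀ + (1+j)) % n = (s₀ + 0) % n := by
      rw [h]; simp [Nat.mod_eq_of_lt C.hs₀n]
    have h2 := el_eq_iff.1 h1
    rw [Nat.mod_eq_of_lt (show 1 + j < n by have := C.htn'; omega), Nat.zero_mod] at h2
    omega
  · exact h

lemma Ctx.fact_i :
    ∀ F ∈ Δw n t W, blockB n t s₀ ⊆ F → F \ blockB n t s₀ ∈ Δw n t (W \ chunkC n t s₀) := by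
  intro F hF hBF
  obtain ⟨⟨hFr, hFrun⟩, hFW⟩ := mem_Δw_iff.1 hF
  refine mem_Δw_iff.2 ⟨⟨Finset.sdiff_subset.trans hFr,
    fun a ha hsub => hFrun a ha (hsub.trans Finset.sdiff_subset)⟩, ?_⟩
  intro x hx
  obtain ⟨hxF, hxB⟩ := Finset.mem_sdiff.1 hx
  refine Finset.mem_sdiff.2 ⟨hFW hxF, ?_⟩
  intro hxC
  obtain ⟨k, hk, hke⟩ := Finset.mem_image.1 hxC
  have hkt : k < t + 1 := Finset.mem_range.1 hk
  rcases Nat.eq_zero_or_pos k with hk0 | hk0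
  · -- x = s₀ : the run starting at s₀ is inside F
    subst hk0
    have hxs : x = s₀ := by rw [← hke]; simp [Nat.mod_eq_of_lt C.hs₀n]
    refine hFrun s₀ C.hs₀n (fun y hy => ?_)
    obtain ⟨k', hk't, hk'e⟩ := mem_cycForm.1 hy
    rcases Nat.eq_zero_or_pos k' with h0 | h0
    · subst h0
      have he0 : (s₀ + 0) % n = x := by rw [hxs]; simp [Nat.mod_eq_of_lt C.hs₀n]
      rw [← hk'e, he0]
      exact hxF
    · refine hBF ?_
      rw [← hk'e]
      exact C.memB.2 (by rw [Nat.mod_eq_of_lt (show k' < n by have := C.htn'; omega)]; omega)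
  · rcases Nat.lt_or_ge k t with hkt' | hkt'
    · -- x ∈ B, contradiction
      apply hxB
      rw [← hke]
      exact C.memB.2 (by rw [Nat.mod_eq_of_lt (show k < n by have := C.htn'; omega)]; omega)
    · -- k = t: the run starting at s₀+1 is inside F
      have hkeq : k = t := by omega
      rw [hkeq] at hke
      have ha1 : (s₀ + 1) % n < n := Nat.mod_lt _ (by have := C.hn2; omega)
      refine hFrun ((s₀ + 1) % n) ha1 (fun y hy => ?_)
      rw [cycForm_shift n t s₀ 1] at hy
      obtain ⟨j, hj, rfl⟩ := Finset.mem_image.1 hy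
      have hjt : j < t := Finset.mem_range.1 hj
      rcases Nat.lt_or_ge j (t-1) with hj1 | hj1
      · refine hBF (C.memB.2 ?_)
        rw [Nat.mod_eq_of_lt (show 1 + j < n by have := C.htn'; omega)]
        omega
      · have hjeq : 1 + j = t := by omega
        rw [hjeq, hke]
        exact hxF

lemma Ctx.fact_ii_disj :
    ∀ G ∈ Δw n t (W \ chunkC n t s₀), Disjoint (blockB n t s₀) G := by
  intro G hG
  rw [Finset.disjoint_left]
  intro x hxB hxG
  have := (mem_Δw_iff.1 hG).2 hxG
  exact (Finset.mem_sdiff.1 this).2 (C.BsubC hxB)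

lemma Ctx.fact_ii :
    ∀ G ∈ Δw n t (W \ chunkC n t s₀), blockB n t s₀ ∪ G ∈ Δw n t W := by
  intro G hG
  obtain ⟨⟨hGr, hGrun⟩, hGW''⟩ := mem_Δw_iff.1 hG
  refine mem_Δw_iff.2 ⟨⟨Finset.union_subset (C.BsubW.trans C.hW) hGr, ?_⟩,
    Finset.union_subset C.BsubW (hGW''.trans Finset.sdiff_subset)⟩
  intro a ha hR
  have hrep := rep_mod (n := n) (s := s₀) (a := a) (by have := C.hn2; omega)
    (by have := C.hs₀n; omega) ha
  obtain ⟨D, hD⟩ : ∃ D, D = (a + n - s₀) % n := ⟨_, rfl⟩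
  rw [← hD] at hrep
  have hform := cycForm_shift n t s₀ D
  rw [← hrep] at hform
  rw [hform] at hR
  have hel : ∀ k < t, (s₀ + (D + k)) % n ∈ blockB n t s₀ ∪ G := by
    intro k hk
    exact hR (Finset.mem_image.2 ⟨k, Finset.mem_range.2 hk, rfl⟩)
  have hdich : ∀ k < t, (1 ≤ (D+k) % n ∧ (D+k) % n ≤ t - 1) ∨ (t < (D+k) % n) := by
    intro k hk
    rcases Finset.mem_union.1 (hel k hk) with h | h
    · exact Or.inl (C.memB.1 h)
    · right
      have hW'' := hGW'' h
      have hnc : (s₀ + (D+k)) % n ∉ chunkC n t s₀ := (Finset.mem_sdiff.1 hW'').2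
      by_contra hc
      push_neg at hc
      exact hnc (C.memC.2 (by omega))
  have hk₁ : ∃ k₁, k₁ < t ∧ t < (D+k₁) % n := by
    by_contra hcon
    push_neg at hcon
    have hall : ∀ k ∈ Finset.range t, (D+k) % n ∈ Finset.Icc 1 (t-1) := by
      intro k hk
      have hkt := Finset.mem_range.1 hk
      rcases hdich k hkt with h | h
      · exact Finset.mem_Icc.2 h
      · exact absurd h (by have := hcon k hkt; omega)
    have hinj : Set.InjOn (fun k => (D+k) % n) (Finset.range t) := by
      intro i hi j hj hij
      simp only [Finset.coe_range, Set.mem_Iio] at hi hj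
      have hij' : (D + i) % n = (D + j) % n := hij
      exact el_inj (show i < n by have := C.htn'; omega)
        (show j < n by have := C.htn'; omega) hij' 
    have hcard := Finset.card_le_card_of_injOn _ hall hinj
    rw [Finset.card_range, Nat.card_Icc] at hcard
    have := C.ht2
    omega
  obtain ⟨k₁, hk₁t, hk₁v⟩ := hk₁
  have hk₀ : ∃ k₀, k₀ < t ∧ (D+k₀) % n ≤ t := by
    by_contra hcon
    push_neg at hcon
    refine hGrun a ha ?_
    rw [hform]
    intro x hx
    obtain ⟨k, hk, rfl⟩ := Finset.mem_image.1 hx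
    have hkt := Finset.mem_range.1 hk
    rcases Finset.mem_union.1 (hel k hkt) with h | h
    · exact absurd (C.memB.1 h) (by have := hcon k hkt; omega)
    · exact h
  obtain ⟨k₀, hk₀t, hk₀v⟩ := hk₀
  rcases Nat.lt_or_ge k₀ k₁ with hord | hord
  · obtain ⟨k, hku, hkv, hQ, hnQ⟩ := cross (Q := fun k => (D+k) % n ≤ t)
      (le_of_lt hord) hk₀v (by omega)
    have hkt : k < t := by omega
    have hvk : (D+k) % n ≤ t - 1 := by
      rcases hdich k hkt with h | h
      · omega
      · omega
    have hstep : (D + (k+1)) % n = (D+k) % n + 1 := by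
      have h1 : (D + (k+1)) % n = ((D+k) % n + 1) % n := by
        rw [Nat.mod_add_mod, show D + k + 1 = D + (k+1) from by ring]
      rw [h1, Nat.mod_eq_of_lt (by have := C.htn'; omega)]
    rw [hstep] at hnQ
    omega
  · have hne' : k₁ ≠ k₀ := fun h => by rw [h] at hk₁v; omega
    have hord' : k₁ < k₀ := by omega
    obtain ⟨k, hku, hkv, hQ, hnQ⟩ := cross (Q := fun k => t < (D+k) % n)
      (le_of_lt hord') hk₁v (by omega)
    push_neg at hnQ
    have hvkn : (D+k) % n < n := Nat.mod_lt _ (by have := C.hn2; omega)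
    have hstep : (D + (k+1)) % n = ((D+k) % n + 1) % n := by
      rw [Nat.mod_add_mod, show D + k + 1 = D + (k+1) from by ring]
    by_cases hwrap : (D+k) % n + 1 = n
    · have hv0 : (D + (k+1)) % n = 0 := by rw [hstep, hwrap, Nat.mod_self]
      rcases hdich (k+1) (by omega) with h | h
      · omega
      · omega
    · rw [hstep, Nat.mod_eq_of_lt (by omega)] at hnQ
      omega

lemma Ctx.red_hdim {ℓ : ℤ} (hne : SC.hdim K (Δw n t W) ℓ ≠ 0) :
    SC.hdim K (Δw n t (W \ chunkC n t s₀)) (ℓ - ((t-1 : ℕ) : ℤ)) ≠ 0 := by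
  refine reduce_hdim (v := s₀) Δw_DC Δw_DC Δw_finite Δw_finite
    C.fact_i C.fact_ii C.fact_ii_disj C.fact_iii ?_ hne
  rw [C.Bcard]

lemma Ctx.chunk_inj : Set.InjOn (fun k => (s₀ + k) % n) (Finset.range (t+1)) := by
  intro i hi j hj hij
  simp only [Finset.coe_range, Set.mem_Iio] at hi hj
  exact el_inj (show i < n by have := C.htn'; omega)
    (show j < n by have := C.htn'; omega) hij

lemma Ctx.card_segs :
    (W \ chunkC n t s₀).card + segs n (W \ chunkC n t s₀) + (t+1) ≤ W.card + segs n W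
    ∧ (W \ chunkC n t s₀).card < W.card := by
  classical
  have hs₀n := C.hs₀n
  have htn' := C.htn'
  have hn2 := C.hn2
  have ht2 := C.ht2
  set P : ℕ → Prop := fun x => (x + (n-1)) % n ∉ W with hP
  set P'' : ℕ → Prop := fun x => (x + (n-1)) % n ∉ (W \ chunkC n t s₀) with hP''
  have hs₀filter : s₀ ∈ W.filter P := Finset.mem_filter.2 ⟨C.hs₀W, C.hpred⟩
  have hsegs1 : 1 ≤ segs n W := Finset.card_pos.2 ⟨s₀, hs₀filter⟩
  have herasecard : ((W.filter P).erase s₀).card = segs n W - 1 :=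
    Finset.card_erase_of_mem hs₀filter
  -- common analysis of starts of W''
  have hstart : ∀ x ∈ (W \ chunkC n t s₀).filter P'',
      (x ∈ (W.filter P).erase s₀) ∨ ((t+1 ≤ m) ∧ x = (s₀ + (t+1)) % n) := by
    intro x hx
    obtain ⟨hxW'', hxp⟩ := Finset.mem_filter.1 hx
    obtain ⟨hxW, hxnc⟩ := Finset.mem_sdiff.1 hxW''
    have hxn : x < n := Finset.mem_range.1 (C.hW hxW)
    have hxs₀ : x ≠ s₀ := fun h => hxnc (h ▸ C.s₀memC)
    by_cases hpx : (x + (n-1)) % n ∈ W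
    · -- predecessor is in W ∩ chunk
      have hpc : (x + (n-1)) % n ∈ chunkC n t s₀ := by
        by_contra hcon
        exact hxp (Finset.mem_sdiff.2 ⟨hpx, hcon⟩)
      obtain ⟨k, hk, hke⟩ := Finset.mem_image.1 hpc
      have hkt : k < t + 1 := Finset.mem_range.1 hk
      have hxe : x = (s₀ + (k+1)) % n := by
        rw [← succ_pred_mod (show 1 ≤ n by omega) hxn, ← hke, Nat.mod_add_mod,
          show s₀ + k + 1 = s₀ + (k+1) from by ring]
      have hknot : ¬ (k + 1 ≤ t) := by
        intro hle
        apply hxnc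
        rw [hxe]
        exact C.memC.2 (by rw [Nat.mod_eq_of_lt (by omega)]; omega)
      have hkeq : k = t := by omega
      rw [hkeq] at hke hxe
      have hm : t + 1 ≤ m := by
        by_contra hcon
        have hmt : m = t := by have := C.htm; omega
        rw [← hke] at hpx
        exact (hmt ▸ C.hmspec) hpx
      exact Or.inr ⟨hm, hxe⟩
    · exact Or.inl (Finset.mem_erase.2 ⟨hxs₀, Finset.mem_filter.2 ⟨hxW, hpx⟩⟩)
  rcases Nat.lt_or_ge m (t+1) with hmt | hmt
  · -- m = t
    have hmeq : m = t := by have := C.htm; omega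
    -- no new start
    have hsub : (W \ chunkC n t s₀).filter P'' ⊆ (W.filter P).erase s₀ := by
      intro x hx
      rcases hstart x hx with h | h
      · exact h
      · omega
    have hsegs'' : segs n (W \ chunkC n t s₀) ≤ segs n W - 1 := by
      have := Finset.card_le_card hsub
      rw [herasecard] at this
      exact this
    -- cards: W \ chunk = W \ chunk'
    set chunk' : Finset ℕ := (Finset.range t).image (fun k => (s₀ + k) % n) with hc'
    have hWc : W \ chunkC n t s₀ = W \ chunk' := by
      ext x
      simp only [Finset.mem_sdiff]
      constructor
      · rintro ⟨hxW, hxc⟩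
        exact ⟨hxW, fun hc => hxc
          (Finset.image_subset_image (Finset.range_subset_range.2 (by omega)) hc)⟩
      · rintro ⟨hxW, hxc'⟩
        refine ⟨hxW, fun hc => ?_⟩
        obtain ⟨k, hk, hke⟩ := Finset.mem_image.1 hc
        have hkt : k < t + 1 := Finset.mem_range.1 hk
        rcases Nat.lt_or_ge k t with h | h
        · exact hxc' (Finset.mem_image.2 ⟨k, Finset.mem_range.2 h, hke⟩)
        · have : k = t := by omega
          subst this
          rw [← hke] at hxW
          exact (hmeq ▸ C.hmspec) hxW
    have hc'W : chunk' ⊆ W := by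
      intro x hx
      obtain ⟨k, hk, rfl⟩ := Finset.mem_image.1 hx
      exact C.hmW k (by have := Finset.mem_range.1 hk; omega)
    have hc'card : chunk'.card = t := by
      rw [hc', Finset.card_image_of_injOn, Finset.card_range]
      intro i hi j hj hij
      simp only [Finset.coe_range, Set.mem_Iio] at hi hj
      exact el_inj (by omega) (by omega) hij
    have hWcard : (W \ chunkC n t s₀).card = W.card - t := by
      rw [hWc, Finset.card_sdiff_of_subset hc'W, hc'card]
    have hWt : t ≤ W.card := by
      have := Finset.card_le_card hc'W
      omega
    constructor
    · omega
    · omega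
  · -- m ≥ t + 1
    have hsub : (W \ chunkC n t s₀).filter P''
        ⊆ insert ((s₀ + (t+1)) % n) ((W.filter P).erase s₀) := by
      intro x hx
      rcases hstart x hx with h | h
      · exact Finset.mem_insert.2 (Or.inr h)
      · exact Finset.mem_insert.2 (Or.inl h.2)
    have hsegs'' : segs n (W \ chunkC n t s₀) ≤ segs n W := by
      have h1 := Finset.card_le_card hsub
      have h2 := Finset.card_insert_le ((s₀ + (t+1)) % n) ((W.filter P).erase s₀)
      rw [herasecard] at h2
      have : segs n (W \ chunkC n t s₀) ≤ segs n W - 1 + 1 := le_trans h1 h2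
      omega
    have hcW : chunkC n t s₀ ⊆ W := by
      intro x hx
      obtain ⟨k, hk, rfl⟩ := Finset.mem_image.1 hx
      exact C.hmW k (by have := Finset.mem_range.1 hk; omega)
    have hccard : (chunkC n t s₀).card = t + 1 := by
      rw [chunkC, Finset.card_image_of_injOn C.chunk_inj, Finset.card_range]
    have hWcard : (W \ chunkC n t s₀).card = W.card - (t+1) := by
      rw [Finset.card_sdiff_of_subset hcW, hccard]
    have hWt : t + 1 ≤ W.card := by
      have := Finset.card_le_card hcW
      omega
    constructor
    · omega
    · omega

end Step


lemma main {n t : ℕ} (ht2 : 2 ≤ t) (htn : t ≤ n) :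
    ∀ N : ℕ, ∀ W : Finset ℕ, W.card ≤ N → W ⊆ Finset.range n → W.card < n →
    ∀ ℓ : ℤ, SC.hdim K (Δw n t W) ℓ ≠ 0 →
    ∃ q : ℕ, ℓ + 1 ≤ ((t - 1) * q : ℕ) ∧ (t + 1) * q ≤ W.card + segs n W := by
  intro N
  induction N with
  | zero =>
    intro W hcard hWr hWn ℓ hne
    have hW0 : W = ∅ := Finset.card_eq_zero.1 (by omega)
    subst hW0
    refine ⟨0, ?_, by simp⟩
    by_contra hcon
    push_neg at hcon
    rw [Nat.mul_zero] at hcon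
    push_cast at hcon
    exact hne (hdim_Δw_empty (by omega))
  | succ N ih =>
    intro W hcard hWr hWn ℓ hne
    rcases Finset.eq_empty_or_nonempty W with hW0 | hW0
    · subst hW0
      refine ⟨0, ?_, by simp⟩
      by_contra hcon
      push_neg at hcon
      rw [Nat.mul_zero] at hcon
      push_cast at hcon
      exact hne (hdim_Δw_empty (by omega))
    · have hn2 : 2 ≤ n := by omega
      obtain ⟨s₀, hs₀W, hpred⟩ := exists_gap (by omega) hWr hWn hW0
      have hs₀n : s₀ < n := Finset.mem_range.1 (hWr hs₀W)
      have hex : ∃ kk, (s₀ + kk) % n ∉ W := ⟨n - 1, hpred⟩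
      set m := Nat.find hex with hm
      have hmspec : (s₀ + m) % n ∉ W := Nat.find_spec hex
      have hmW : ∀ i < m, (s₀ + i) % n ∈ W := by
        intro i hi
        by_contra hc
        exact (Nat.find_min hex hi) hc
      have hm1 : 1 ≤ m := by
        rcases Nat.eq_zero_or_pos m with h0 | h0
        · exfalso
          have hco := hmspec
          rw [h0] at hco
          simp [Nat.mod_eq_of_lt hs₀n] at hco
          exact hco hs₀W
        · exact h0
      have hmn : m ≤ n - 1 := Nat.find_min' hex hpred
      by_cases hmt : m < t
      · -- the chosen segment is short: the whole complex is a cone with apex s₀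
        exfalso
        apply hne
        apply cone_hdim Δw_DC Δw_finite s₀ ?_ ℓ
        intro F hF
        refine insert_s0_mem hn2 htn hWr hs₀W hpred hF ?_
        intro hsub
        have hmem : (s₀ + m) % n ∈ cycForm n t s₀ := mem_cycForm.2 ⟨m, hmt, rfl⟩
        rcases Finset.mem_insert.1 (hsub hmem) with h | h
        · have h1 : (s₀ + m) % n = (s₀ + 0) % n := by
            rw [h]; simp [Nat.mod_eq_of_lt hs₀n]
          have h2 := el_eq_iff.1 h1
          rw [Nat.mod_eq_of_lt (show m < n by omega), Nat.zero_mod] at h2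
          omega
        · exact hmspec ((mem_Δw_iff.1 hF).2 h)
      · -- long segment: reduce
        have htm : t ≤ m := le_of_not_gt hmt
        have htn' : t < n := by omega
        have C : Ctx n t W s₀ m :=
          ⟨ht2, htn', hWr, hs₀W, hpred, hmW, hmspec, hm1, hmn, htm⟩
        have hred := C.red_hdim (K := K) hne
        obtain ⟨hcs, hlt⟩ := C.card_segs
        have hW''r : W \ chunkC n t s₀ ⊆ Finset.range n :=
          Finset.sdiff_subset.trans hWr
        obtain ⟨q'', hq1, hq2⟩ := ih (W \ chunkC n t s₀) (by omega) hW''r (by omega)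
          (ℓ - ((t - 1 : ℕ) : ℤ)) hred
        refine ⟨q'' + 1, ?_, ?_⟩
        · have hms : (t - 1) * (q'' + 1) = (t - 1) * q'' + (t - 1) := by ring
          rw [hms]
          push_cast at hq1 ⊢
          linarith
        · have hms : (t + 1) * (q'' + 1) = (t + 1) * q'' + (t + 1) := by ring
          rw [hms]
          linarith [hq2, hcs]

end SCPf

/-- Theorem 5.4(2). If `2 ≤ t ≤ n`, `n = (t+1)p + d`, `0 ≤ d ≤ t`,
`i ≤ j < n` and `β_{i,j}(R/I_t(C_n)) ≠ 0`, then `j − i ≤ (t−1)p`. -/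
theorem nonzero_betti_reg_bound (K : Type) [Field K] (n t p d i j : ℕ) (ht2 : 2 ≤ t)
    (htn : t ≤ n) (hd : d ≤ t) (hn : n = (t + 1) * p + d) (hij : i ≤ j) (hjn : j < n)
    (hb : bettiCycle K n t i j ≠ 0) : j - i ≤ (t - 1) * p := by
  classical
  unfold bettiCycle betti at hb
  obtain ⟨W, hWmem, hWne⟩ := Finset.exists_ne_zero_of_sum_ne_zero hb
  obtain ⟨hWsub, hWcard⟩ := Finset.mem_powersetCard.1 hWmem
  have hne' : SC.hdim K (SCPf.Δw n t W) ((j : ℤ) - i - 1) ≠ 0 := hWne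
  obtain ⟨q, hq1, hq2⟩ := SCPf.main (K := K) ht2 htn W.card W le_rfl hWsub
    (by omega) _ hne'
  have hn0 : 0 < n := by omega
  have hsegs : SCPf.segs n W ≤ n - j := by
    have hcle : (W.filter (fun x => (x + (n - 1)) % n ∉ W)).card
        ≤ (Finset.range n \ W).card := by
      apply Finset.card_le_card_of_injOn (fun x => (x + (n - 1)) % n)
      · intro x hx
        obtain ⟨hxW, hxp⟩ := Finset.mem_filter.1 hx
        exact Finset.mem_sdiff.2 ⟨Finset.mem_range.2 (Nat.mod_lt _ hn0), hxp⟩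
      · intro x hx y hy hxy
        have hxW : x ∈ W := (Finset.mem_filter.1 hx).1
        have hyW : y ∈ W := (Finset.mem_filter.1 hy).1
        have hxn : x < n := Finset.mem_range.1 (hWsub hxW)
        have hyn : y < n := Finset.mem_range.1 (hWsub hyW)
        have h1 : ((n - 1) + x) % n = ((n - 1) + y) % n := by
          rw [Nat.add_comm (n-1) x, Nat.add_comm (n-1) y]
          exact hxy
        exact SCPf.el_inj hxn hyn h1
    rw [Finset.card_sdiff_of_subset hWsub, Finset.card_range, hWcard] at hcle
    exact hcle
  have hqp : q ≤ p := by
    rw [hWcard] at hq2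
    have h1 : (t + 1) * q ≤ n := by omega
    by_contra hcon
    push_neg at hcon
    have h2 : (t + 1) * (p + 1) ≤ (t + 1) * q := Nat.mul_le_mul_left _ hcon
    have h3 : (t + 1) * (p + 1) = (t + 1) * p + (t + 1) := by ring
    omega
  have hfin : (j : ℤ) - i ≤ (((t - 1) * p : ℕ) : ℤ) := by
    have h3 : ((t - 1) * q : ℕ) ≤ ((t - 1) * p : ℕ) := Nat.mul_le_mul_left _ hqp
    calc (j : ℤ) - i = (j : ℤ) - i - 1 + 1 := by ring
    _ ≤ (((t - 1) * q : ℕ) : ℤ) := hq1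
    _ ≤ (((t - 1) * p : ℕ) : ℤ) := by exact_mod_cast h3
  have hcast : ((j - i : ℕ) : ℤ) = (j : ℤ) - i := by
    push_cast [hij]
    ring
  omega
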